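/- For every n ≥ 2, the rook monoid R_2 satisfies the semigroup identity v_{n,2}^{(2)} ≈ (v_{n,2}^{(2)})². -/

import Mathlib

universe u v

/-- Evaluation of a (nonempty) word, given as a list of variables, in a magma with an
explicit binary operation; the empty word evaluates to `none`. -/
def wEval {ι S : Type*} (mul : S → S → S) (ρ : ι → S) : List ι → Option S
  | [] => none
  | a :: l => some (l.foldl (fun s i => mul s (ρ i)) (ρ a))

/-- The word `u_{n,k,m} = x₁⋯x_{n+k}(xₙ⋯x₁·x_{n+1}⋯x_{n+k})^{2m-1}` (variables 0-indexed). -/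
def uWord (n k m : ℕ) : List ℕ :=
  List.range (n + k) ++
    (List.replicate (2 * m - 1) ((List.range n).reverse ++ List.range' n k)).flatten

/-- The words `v_{n,m}^{(h)}` (`h ≥ 1`), over variables indexed by `h`-tuples from `{0,…,2n-1}`:
`v_{n,m}^{(1)} = u_{n,n,m}`, and `v_{n,m}^{(h+1)}` is obtained by substituting, for the `j`-th
variable of `v_{n,m}^{(1)}`, the copy of `v_{n,m}^{(h)}` whose variables get `j` appended. -/
def vWord (n m : ℕ) : ℕ → List (List ℕ)
  | 0 => []
  | 1 => (uWord n n m).map (fun i => [i])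
  | h + 2 => (uWord n n m).flatMap (fun j => (vWord n m (h + 1)).map (fun xs => xs ++ [j]))

/-- The rook monoid `R_t`: zero-one `t × t` matrices with at most one entry equal to `1`
in each row and in each column. -/
def RookSet (t : ℕ) : Set (Matrix (Fin t) (Fin t) ℕ) :=
  {A | (∀ i j, A i j = 0 ∨ A i j = 1) ∧
    (∀ i j k, A i j = 1 → A i k = 1 → j = k) ∧
    (∀ i j k, A i k = 1 → A j k = 1 → i = j)}

/- ### Auxiliary material -/

abbrev M2 := Matrix (Fin 2) (Fin 2) ℕ

def rkZ : M2 := !![0,0;0,0]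
def rkI : M2 := !![1,0;0,1]
def rkS : M2 := !![0,1;1,0]
def rkE11 : M2 := !![1,0;0,0]
def rkE12 : M2 := !![0,1;0,0]
def rkE21 : M2 := !![0,0;1,0]
def rkE22 : M2 := !![0,0;0,1]

def Rl : List M2 := [rkZ, rkI, rkS, rkE11, rkE12, rkE21, rkE22]
def Nl : List M2 := [rkZ, rkE11, rkE12, rkE21, rkE22]
def Gl : List M2 := [rkI, rkS]

def phi (A : M2) : ZMod 2 := if A = rkS ∨ A = rkE12 ∨ A = rkE21 then 1 else 0

lemma one_mem_Rl : (1 : M2) ∈ Rl := by decide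
lemma mul_mem_Rl : ∀ a ∈ Rl, ∀ b ∈ Rl, a * b ∈ Rl := by decide
lemma mul_mem_Nl_left : ∀ a ∈ Rl, ∀ b ∈ Nl, a * b ∈ Nl := by decide
lemma mul_mem_Nl_right : ∀ a ∈ Nl, ∀ b ∈ Rl, a * b ∈ Nl := by decide
lemma mul_Gl : ∀ a ∈ Rl, ∀ b ∈ Rl, a * b ∈ Gl → a ∈ Gl ∧ b ∈ Gl := by decide
lemma Gl_mul : ∀ a ∈ Gl, ∀ b ∈ Gl, a * b ∈ Gl := by decide
lemma Gl_comm : ∀ a ∈ Gl, ∀ b ∈ Gl, a * b = b * a := by decide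
lemma one_mem_Gl : (1 : M2) ∈ Gl := by decide
lemma phi_mul : ∀ a ∈ Rl, ∀ b ∈ Rl, a * b ≠ 0 → phi (a * b) = phi a + phi b := by decide
lemma phi_one : phi 1 = 0 := by decide
lemma final_lemma : ∀ d ∈ Rl, ∀ c ∈ Rl, (c ∈ Gl → d = c) →
    (d ≠ 0 → c ≠ 0 → phi d = phi c) →
    (d * (c * (c * c))) * (d * (c * (c * c))) = d * (c * (c * c)) := by decide

lemma mem_Rl_of_rook {A : M2} (h : A ∈ RookSet 2) : A ∈ Rl := by
  obtain ⟨h0, h1, h2⟩ := h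
  have e := Matrix.etaExpand_eq A
  rcases h0 0 0 with h00|h00 <;> rcases h0 0 1 with h01|h01 <;>
    rcases h0 1 0 with h10|h10 <;> rcases h0 1 1 with h11|h11 <;>
    first
      | exact absurd (h1 0 0 1 h00 h01) (by decide)
      | exact absurd (h1 1 0 1 h10 h11) (by decide)
      | exact absurd (h2 0 1 0 h00 h10) (by decide)
      | exact absurd (h2 0 1 1 h01 h11) (by decide)
      | (rw [Matrix.eta_fin_two A, h00, h01, h10, h11]; decide)

lemma prod_mem_Rl : ∀ l : List M2, (∀ x ∈ l, x ∈ Rl) → l.prod ∈ Rl := by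
  intro l
  induction l with
  | nil => intro _; simpa using one_mem_Rl
  | cons a l ih =>
      intro h
      rw [List.prod_cons]
      exact mul_mem_Rl a (h a (by simp)) _ (ih fun x hx => h x (by simp [hx]))

lemma prod_mem_Nl : ∀ l : List M2, (∀ x ∈ l, x ∈ Rl) → (∃ x ∈ l, x ∈ Nl) → l.prod ∈ Nl := by
  intro l
  induction l with
  | nil => rintro _ ⟨x, hx, _⟩; simp at hx
  | cons a l ih =>
      rintro h ⟨x, hx, hxN⟩
      rw [List.prod_cons]
      have hl : ∀ y ∈ l, y ∈ Rl := fun y hy => h y (by simp [hy])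
      rcases List.mem_cons.mp hx with rfl | hx'
      · exact mul_mem_Nl_right x hxN _ (prod_mem_Rl l hl)
      · exact mul_mem_Nl_left a (h a (by simp)) _ (ih hl ⟨x, hx', hxN⟩)

lemma phi_prod : ∀ l : List M2, (∀ x ∈ l, x ∈ Rl) → l.prod ≠ 0 →
    phi l.prod = (l.map phi).sum := by
  intro l
  induction l with
  | nil => intro _ _; simpa using phi_one
  | cons a l ih =>
      intro h hne
      rw [List.prod_cons] at hne ⊢
      have hl : ∀ y ∈ l, y ∈ Rl := fun y hy => h y (by simp [hy])
      have hp : l.prod ≠ 0 := by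
        intro h0; rw [h0, mul_zero] at hne; exact hne rfl
      rw [phi_mul a (h a (by simp)) _ (prod_mem_Rl l hl) hne, ih hl hp]
      simp

lemma prod_mem_Gl : ∀ l : List M2, (∀ x ∈ l, x ∈ Gl) → l.prod ∈ Gl := by
  intro l
  induction l with
  | nil => intro _; simpa using one_mem_Gl
  | cons a l ih =>
      intro h
      rw [List.prod_cons]
      exact Gl_mul a (h a (by simp)) _ (ih fun x hx => h x (by simp [hx]))

lemma prod_reverse_Gl : ∀ l : List M2, (∀ x ∈ l, x ∈ Gl) → l.reverse.prod = l.prod := by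
  intro l
  induction l with
  | nil => intro _; rfl
  | cons a l ih =>
      intro h
      have hl : ∀ y ∈ l, y ∈ Gl := fun y hy => h y (by simp [hy])
      rw [List.reverse_cons, List.prod_append, List.prod_cons, List.prod_nil, mul_one,
        ih hl, List.prod_cons]
      exact Gl_comm _ (prod_mem_Gl l hl) a (h a (by simp))

lemma all_Gl_of_prod_Gl : ∀ l : List M2, (∀ x ∈ l, x ∈ Rl) → l.prod ∈ Gl →
    ∀ x ∈ l, x ∈ Gl := by
  intro l
  induction l with
  | nil => intro _ _ x hx; simp at hx
  | cons a l ih =>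
      intro h hG x hx
      rw [List.prod_cons] at hG
      have hl : ∀ y ∈ l, y ∈ Rl := fun y hy => h y (by simp [hy])
      have := mul_Gl a (h a (by simp)) _ (prod_mem_Rl l hl) hG
      rcases List.mem_cons.mp hx with rfl | hx'
      · exact this.1
      · exact ih hl this.2 x hx'

lemma main_lemma (n : ℕ) (σ : ℕ → M2) (hσ : ∀ j, σ j ∈ Rl) :
    ((uWord n n 2).map σ).prod * ((uWord n n 2).map σ).prod = ((uWord n n 2).map σ).prod := by
  have hrange : List.range (n + n) = List.range n ++ List.range' n n := by
    rw [List.range_add, List.range'_eq_map_range]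
  have hu : uWord n n 2 =
      (List.range n ++ List.range' n n) ++
        (((List.range n).reverse ++ List.range' n n) ++
          (((List.range n).reverse ++ List.range' n n) ++
            ((List.range n).reverse ++ List.range' n n))) := by
    show List.range (n + n) ++ _ = _
    rw [hrange, show (2 * 2 - 1 : ℕ) = 3 from rfl, List.replicate_succ, List.replicate_succ,
      List.replicate_succ, List.replicate_zero, List.flatten_cons, List.flatten_cons,
      List.flatten_cons, List.flatten_nil, List.append_nil]
  rw [hu]
  simp only [List.map_append, List.prod_append]
  set PL := ((List.range n).map σ).prod with hPL
  set PR := (((List.range n).reverse).map σ).prod with hPR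
  set QL := ((List.range' n n).map σ).prod with hQL
  have hmem : ∀ (l : List ℕ), ∀ x ∈ l.map σ, x ∈ Rl := by
    rintro l x hx
    obtain ⟨j, _, rfl⟩ := List.mem_map.mp hx
    exact hσ j
  have hPLm : PL ∈ Rl := prod_mem_Rl _ (hmem _)
  have hPRm : PR ∈ Rl := prod_mem_Rl _ (hmem _)
  have hQLm : QL ∈ Rl := prod_mem_Rl _ (hmem _)
  have hD : PL * QL ∈ Rl := mul_mem_Rl _ hPLm _ hQLm
  have hC : PR * QL ∈ Rl := mul_mem_Rl _ hPRm _ hQLm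
  refine final_lemma _ hD _ hC ?_ ?_
  · -- C ∈ Gl → D = C
    intro hCG
    have hCprod : (((List.range n).reverse ++ List.range' n n).map σ).prod = PR * QL := by
      rw [List.map_append, List.prod_append]
    have hall : ∀ x ∈ ((List.range n).reverse ++ List.range' n n).map σ, x ∈ Gl := by
      apply all_Gl_of_prod_Gl _ (hmem _)
      rw [hCprod]; exact hCG
    have hallP : ∀ x ∈ (List.range n).map σ, x ∈ Gl := by
      intro x hx
      apply hall
      rw [List.map_append]
      apply List.mem_append_left
      obtain ⟨j, hj, rfl⟩ := List.mem_map.mp hx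
      exact List.mem_map_of_mem (f := σ) (List.mem_reverse.mpr hj)
    have : PR = PL := by
      rw [hPR, List.map_reverse]
      exact prod_reverse_Gl _ (by intro x hx; exact hallP x (by simpa using hx))
    rw [this]
  · -- phi equality
    intro hDne hCne
    have hPLprod : PL * QL = ((List.range n ++ List.range' n n).map σ).prod := by
      rw [List.map_append, List.prod_append]
    have hPRprod : PR * QL = (((List.range n).reverse ++ List.range' n n).map σ).prod := by
      rw [List.map_append, List.prod_append]
    rw [hPLprod] at hDne ⊢
    rw [hPRprod] at hCne ⊢
    rw [phi_prod _ (hmem _) hDne, phi_prod _ (hmem _) hCne]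
    simp only [List.map_append, List.sum_append, List.map_reverse, List.sum_reverse]

lemma foldl_eq_prod {ι : Type u} (ρ : ι → M2) :
    ∀ (l : List ι) (x : M2), l.foldl (fun s i => s * ρ i) x = x * (l.map ρ).prod := by
  intro l
  induction l with
  | nil => intro x; simp
  | cons a l ih => intro x; simp [ih, mul_assoc]

lemma wEval_eq_prod {ι : Type u} (ρ : ι → M2) (l : List ι) (h : l ≠ []) :
    wEval (· * ·) ρ l = some ((l.map ρ).prod) := by
  cases l with
  | nil => exact absurd rfl h
  | cons a l =>
      show some _ = _
      rw [foldl_eq_prod]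
      simp

/-- For every `n ≥ 2`, the rook monoid `R₂` satisfies the semigroup identity
`v_{n,2}^{(2)} ≈ (v_{n,2}^{(2)})²`. -/
theorem rook2_satisfies_v_identity :
    ∀ n, 2 ≤ n → ∀ ρ : List ℕ → Matrix (Fin 2) (Fin 2) ℕ, (∀ v, ρ v ∈ RookSet 2) →
      wEval (· * ·) ρ (vWord n 2 2) = wEval (· * ·) ρ (vWord n 2 2 ++ vWord n 2 2) := by
  intro n hn ρ hρ
  have hW : vWord n 2 2 =
      (uWord n n 2).flatMap (fun j => (vWord n 2 1).map (fun xs => xs ++ [j])) := rfl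
  have hu_mem : (0 : ℕ) ∈ uWord n n 2 := by
    unfold uWord
    exact List.mem_append_left _ (List.mem_range.mpr (by omega))
  have hw1_mem : ([0] : List ℕ) ∈ vWord n 2 1 := by
    show _ ∈ (uWord n n 2).map _
    exact List.mem_map_of_mem hu_mem
  have hv_ne : vWord n 2 2 ≠ [] := by
    apply List.ne_nil_of_mem (a := ([0] ++ [0] : List ℕ))
    rw [hW]
    exact List.mem_flatMap.mpr ⟨0, hu_mem, List.mem_map_of_mem hw1_mem⟩
  set σ : ℕ → M2 := fun j => (((vWord n 2 1).map (fun xs => xs ++ [j])).map ρ).prod with hσdef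
  have hσ : ∀ j, σ j ∈ Rl := by
    intro j
    apply prod_mem_Rl
    intro x hx
    obtain ⟨xs, _, rfl⟩ := List.mem_map.mp hx
    exact mem_Rl_of_rook (hρ xs)
  have key : ((vWord n 2 2).map ρ).prod = ((uWord n n 2).map σ).prod := by
    rw [hW, List.map_flatMap, List.flatMap_def, List.prod_flatten, List.map_map]
    rfl
  have hmain := main_lemma n σ hσ
  rw [wEval_eq_prod ρ _ hv_ne, wEval_eq_prod ρ _ (by simp [hv_ne]),
    List.map_append, List.prod_append, key, hmain]
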